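/- arXiv:1103.1112 — 4 statements merged into one kernel-verified Lean document; each statement's English description precedes it below -/
import Mathlib

section
/- The minimum size of a dynamic monopoly of the Cartesian product Kₙ □ Kₙ, where every vertex has threshold n − 1, equals ⌊n²/4⌋. -/
open SimpleGraph

/-- One step of the irreversible activation process: every vertex with at least `τ v`
active neighbors becomes active, and active vertices stay active. -/
def activationStep {V : Type*} (G : SimpleGraph V) (τ : V → ℕ) (A : Set V) : Set V :=
  A ∪ {v | τ v ≤ (G.neighborSet v ∩ A).ncard}

/-- `D` is a dynamic monopoly (dynamo) of `(G, τ)`: iterating the activation process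
starting from `D` eventually activates all vertices. -/
def IsDynamo {V : Type*} (G : SimpleGraph V) (τ : V → ℕ) (D : Set V) : Prop :=
  ∃ j : ℕ, (activationStep G τ)^[j] D = Set.univ

/-- `K` is (the vertex set of) a resistant subgraph of `(G, τ)`:
every vertex `v` of `K` satisfies `d_K(v) ≥ d_G(v) − τ(v) + 1` (as integers). -/
def IsResistant {V : Type*} (G : SimpleGraph V) (τ : V → ℕ) (K : Set V) : Prop :=
  K.Nonempty ∧ ∀ v ∈ K, (G.neighborSet v).ncard + 1 ≤ (G.neighborSet v ∩ K).ncard + τ v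

/-- The minimum size of a dynamic monopoly of `(G, τ)`. -/
noncomputable def dyn {V : Type*} (G : SimpleGraph V) (τ : V → ℕ) : ℕ :=
  sInf {k : ℕ | ∃ D : Set V, D.ncard = k ∧ IsDynamo G τ D}

open Finset

section Basics
variable {V : Type*} (G : SimpleGraph V) (τ : V → ℕ)

lemma subset_activationStep (A : Set V) : A ⊆ activationStep G τ A :=
  Set.subset_union_left

lemma activationStep_mono [Finite V] {A B : Set V} (h : A ⊆ B) :
    activationStep G τ A ⊆ activationStep G τ B := by
  rintro v (hv | hv)
  · exact Or.inl (h hv)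
  · exact Or.inr (le_trans hv (Set.ncard_le_ncard (Set.inter_subset_inter_right _ h) (Set.toFinite _)))

lemma activationStep_iterate_mono [Finite V] (j : ℕ) {A B : Set V} (h : A ⊆ B) :
    (activationStep G τ)^[j] A ⊆ (activationStep G τ)^[j] B := by
  induction j generalizing A B with
  | zero => exact h
  | succ j ih =>
    rw [Function.iterate_succ_apply, Function.iterate_succ_apply]
    exact ih (activationStep_mono G τ h)

lemma isDynamo_superset [Finite V] {D D' : Set V} (hD : IsDynamo G τ D) (h : D ⊆ D') :
    IsDynamo G τ D' := by
  obtain ⟨j, hj⟩ := hD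
  exact ⟨j, Set.eq_univ_of_univ_subset (hj ▸ activationStep_iterate_mono G τ j h)⟩

lemma exists_trigger [Finite V] {D : Set V} (hD : IsDynamo G τ D) (hne : D ≠ Set.univ) :
    ∃ v, v ∉ D ∧ τ v ≤ (G.neighborSet v ∩ D).ncard := by
  by_contra h
  push_neg at h
  have hfix : activationStep G τ D = D := by
    apply Set.Subset.antisymm _ (subset_activationStep G τ D)
    rintro v (hv | hv)
    · exact hv
    · by_contra hvD
      exact absurd hv (not_le.2 (h v hvD))
  have hall : ∀ j, (activationStep G τ)^[j] D = D := by
    intro j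
    induction j with
    | zero => rfl
    | succ j ih => rw [Function.iterate_succ_apply', ih, hfix]
  obtain ⟨j, hj⟩ := hD
  exact hne ((hall j) ▸ hj)

end Basics

section Lower

universe u v

lemma key_count {α : Type u} {β : Type v} [Finite α] [Finite β] (a₀ : α) (b₀ : β)
    (w : {x // x ≠ a₀} × {y // y ≠ b₀}) (A : Set (α × β)) :
    ((((⊤:SimpleGraph α) □ (⊤:SimpleGraph β)).neighborSet (w.1.1, w.2.1)) ∩ A).ncard
      ≤ ((((⊤:SimpleGraph {x // x ≠ a₀}) □ (⊤:SimpleGraph {y // y ≠ b₀})).neighborSet w) ∩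
          ((fun p : {x // x ≠ a₀} × {y // y ≠ b₀} => ((p.1.1, p.2.1) : α × β)) ⁻¹' A)).ncard + 2 := by
  classical
  obtain ⟨⟨a, ha⟩, ⟨b, hb⟩⟩ := w
  set e : {x // x ≠ a₀} × {y // y ≠ b₀} → α × β := fun p => (p.1.1, p.2.1) with he
  have einj : Function.Injective e := by
    rintro ⟨⟨x,hx⟩,⟨y,hy⟩⟩ ⟨⟨x',hx'⟩,⟨y',hy'⟩⟩ h
    simp only [e, Prod.mk.injEq] at h
    simp [Prod.ext_iff, Subtype.ext_iff, h.1, h.2]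
  have hsub : (((⊤:SimpleGraph α) □ (⊤:SimpleGraph β)).neighborSet (a, b)) ∩ A ⊆
      (e '' ((((⊤:SimpleGraph {x // x ≠ a₀}) □ (⊤:SimpleGraph {y // y ≠ b₀})).neighborSet (⟨a,ha⟩,⟨b,hb⟩)) ∩ (e ⁻¹' A)))
        ∪ {(a, b₀), (a₀, b)} := by
    rintro ⟨x, y⟩ ⟨hadj, hA⟩
    rw [SimpleGraph.mem_neighborSet, SimpleGraph.boxProd_adj] at hadj
    rcases hadj with ⟨hxy, h2⟩ | ⟨hxy, h2⟩
    · subst h2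
      rcases eq_or_ne x a₀ with rfl | hxa
      · exact Or.inr (by simp)
      · refine Or.inl ⟨(⟨x, hxa⟩, ⟨b, hb⟩), ⟨?_, hA⟩, rfl⟩
        rw [SimpleGraph.mem_neighborSet, SimpleGraph.boxProd_adj]
        exact Or.inl ⟨by simpa [Subtype.ext_iff] using hxy.ne, rfl⟩
    · subst h2
      rcases eq_or_ne y b₀ with rfl | hyb
      · exact Or.inr (by simp)
      · refine Or.inl ⟨(⟨a, ha⟩, ⟨y, hyb⟩), ⟨?_, hA⟩, rfl⟩
        rw [SimpleGraph.mem_neighborSet, SimpleGraph.boxProd_adj]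
        exact Or.inr ⟨by simpa [Subtype.ext_iff] using hxy.ne, rfl⟩
  calc (((⊤:SimpleGraph α) □ (⊤:SimpleGraph β)).neighborSet (a, b) ∩ A).ncard
      ≤ _ := Set.ncard_le_ncard hsub (Set.toFinite _)
    _ ≤ _ := Set.ncard_union_le _ _
    _ ≤ _ := by
        rw [Set.ncard_image_of_injective _ einj]
        have : ({(a, b₀), (a₀, b)} : Set (α × β)).ncard ≤ 2 :=
          le_trans (Set.ncard_insert_le _ _) (by simp)
        omega

lemma lower_bound : ∀ (t : ℕ) {α : Type u} {β : Type v} [Fintype α] [Fintype β]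
    (D : Set (α × β)),
    t + 2 ≤ 2 * min (Fintype.card α) (Fintype.card β) →
    IsDynamo ((⊤ : SimpleGraph α) □ (⊤ : SimpleGraph β)) (fun _ => t) D →
    (t + 1) ^ 2 / 4 ≤ D.ncard := by
  intro t
  induction t using Nat.strong_induction_on with
  | _ t ih =>
  obtain _ | (_ | r) := t
  · intro α β _ _ D h hD
    simp
  · -- t = 1
    intro α β _ _ D h hD
    have hne : D.Nonempty := by
      rcases D.eq_empty_or_nonempty with rfl | h' 
      · exfalso
        have hfix : activationStep ((⊤ : SimpleGraph α) □ (⊤ : SimpleGraph β)) (fun _ => 1)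
            (∅ : Set (α × β)) = ∅ := by
          simp [activationStep]
        have hall : ∀ j, (activationStep ((⊤ : SimpleGraph α) □ (⊤ : SimpleGraph β))
            (fun _ => 1))^[j] (∅ : Set (α × β)) = ∅ := by
          intro j
          induction j with
          | zero => rfl
          | succ j ihj => rw [Function.iterate_succ_apply', ihj, hfix]
        obtain ⟨j, hj⟩ := hD
        rw [hall j] at hj
        have hα : 0 < Fintype.card α := by omega
        have hβ : 0 < Fintype.card β := by omega
        rw [Fintype.card_pos_iff] at hα hβ
        obtain ⟨a⟩ := hα; obtain ⟨b⟩ := hβ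
        exact absurd (hj ▸ (Set.mem_univ (a, b))) (by simp)
      · exact h'
    have : 1 ≤ D.ncard := by
      rw [Nat.one_le_iff_ne_zero]
      simpa [Set.ncard_eq_zero (Set.toFinite D)] using hne.ne_empty
    simpa using this
  · -- t = r + 2
    intro α β instα instβ D h hD
    by_cases hu : D = Set.univ
    · subst hu
      rw [Set.ncard_univ, Nat.card_eq_fintype_card, Fintype.card_prod]
      have ha : r + 4 ≤ 2 * Fintype.card α := le_trans (by omega) (le_trans h (by
        have := min_le_left (Fintype.card α) (Fintype.card β); omega))
      have hb : r + 4 ≤ 2 * Fintype.card β := le_trans (by omega) (le_trans h (by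
        have := min_le_right (Fintype.card α) (Fintype.card β); omega))
      have h1 : (r + 2 + 1) ^ 2 ≤ 4 * (Fintype.card α * Fintype.card β) := by nlinarith
      calc (r + 2 + 1) ^ 2 / 4 ≤ 4 * (Fintype.card α * Fintype.card β) / 4 :=
            Nat.div_le_div_right h1
        _ = _ := Nat.mul_div_cancel_left _ (by norm_num)
    · obtain ⟨v, hvD, hvcount⟩ :=
        exists_trigger ((⊤ : SimpleGraph α) □ (⊤ : SimpleGraph β)) (fun _ => r + 2) hD hu
      obtain ⟨a₀, b₀⟩ := v
      classical
      set e : {x // x ≠ a₀} × {y // y ≠ b₀} → α × β := fun p => (p.1.1, p.2.1) with he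
      have einj : Function.Injective e := by
        rintro ⟨⟨x,hx⟩,⟨y,hy⟩⟩ ⟨⟨x',hx'⟩,⟨y',hy'⟩⟩ hh
        simp only [e, Prod.mk.injEq] at hh
        simp [Prod.ext_iff, Subtype.ext_iff, hh.1, hh.2]
      set G := (⊤ : SimpleGraph α) □ (⊤ : SimpleGraph β) with hG
      set G' := (⊤ : SimpleGraph {x // x ≠ a₀}) □ (⊤ : SimpleGraph {y // y ≠ b₀}) with hG'
      set D' : Set ({x // x ≠ a₀} × {y // y ≠ b₀}) := e ⁻¹' D with hD'def
      have trans1 : ∀ A : Set (α × β),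
          e ⁻¹' (activationStep G (fun _ => r + 2) A) ⊆
            activationStep G' (fun _ => r) (e ⁻¹' A) := by
        intro A w hw
        rcases hw with hw | hw
        · exact Or.inl hw
        · refine Or.inr ?_
          have hk := key_count a₀ b₀ w A
          simp only [← hG, ← hG', ← he] at hk
          rw [show ((w.1.1 : α), (w.2.1 : β)) = e w from rfl] at hk
          simp only [Set.mem_setOf_eq] at hw ⊢
          omega
      have iter : ∀ j, e ⁻¹' ((activationStep G (fun _ => r + 2))^[j] D) ⊆
          (activationStep G' (fun _ => r))^[j] D' := by
        intro j
        induction j with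
        | zero => exact subset_rfl
        | succ j ihj =>
          rw [Function.iterate_succ_apply', Function.iterate_succ_apply']
          exact le_trans (trans1 _) (activationStep_mono G' _ ihj)
      have hDyn' : IsDynamo G' (fun _ => r) D' := by
        obtain ⟨j, hj⟩ := hD
        refine ⟨j, Set.eq_univ_of_univ_subset ?_⟩
        have := iter j
        rw [hj] at this
        simpa using this
      have hcard_sub : Fintype.card {x // x ≠ a₀} = Fintype.card α - 1 := by
        simp [Fintype.card_subtype_compl]
      have hcard_sub' : Fintype.card {y // y ≠ b₀} = Fintype.card β - 1 := by
        simp [Fintype.card_subtype_compl]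
      have hIH : (r + 1) ^ 2 / 4 ≤ D'.ncard := by
        refine ih r (by omega) D' ?_ hDyn'
        rw [hcard_sub, hcard_sub']
        have h1 := min_le_left (Fintype.card α) (Fintype.card β)
        have h2 := min_le_right (Fintype.card α) (Fintype.card β)
        have := le_min_iff.1 (le_refl (min (Fintype.card α) (Fintype.card β)))
        omega
      -- counting
      have hdisj : Disjoint (G.neighborSet (a₀, b₀) ∩ D) (e '' D') := by
        rw [Set.disjoint_left]
        rintro ⟨x, y⟩ ⟨hadj, _⟩ ⟨⟨⟨x', hx'⟩, ⟨y', hy'⟩⟩, _, heq⟩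
        simp only [e, Prod.mk.injEq] at heq
        rw [SimpleGraph.mem_neighborSet, SimpleGraph.boxProd_adj] at hadj
        rcases hadj with ⟨_, h2⟩ | ⟨_, h2⟩
        · exact hy' (heq.2.trans h2.symm)
        · exact hx' (heq.1.trans h2.symm)
      have hsubD : (G.neighborSet (a₀, b₀) ∩ D) ∪ (e '' D') ⊆ D := by
        apply Set.union_subset Set.inter_subset_right
        exact Set.image_preimage_subset e D
      have hcount : (r + 2) + (r + 1) ^ 2 / 4 ≤ D.ncard := by
        have h1 : ((G.neighborSet (a₀, b₀) ∩ D) ∪ (e '' D')).ncard ≤ D.ncard :=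
          Set.ncard_le_ncard hsubD (Set.toFinite _)
        rw [Set.ncard_union_eq hdisj (Set.toFinite _) (Set.toFinite _),
          Set.ncard_image_of_injective _ einj] at h1
        omega
      have harith : (r + 1 + 1 + 1) ^ 2 / 4 = (r + 2) + (r + 1) ^ 2 / 4 := by
        have : (r + 1 + 1 + 1) ^ 2 = (r + 1) ^ 2 + (r + 2) * 4 := by ring
        rw [this, Nat.add_mul_div_right _ _ (by norm_num : (0:ℕ) < 4)]
        omega
      omega

end Lower

namespace Stmt14


lemma parity_count (r : ℕ) : ∀ m : ℕ,
    (((range m).filter (fun u => (u + r) % 2 = 0)).card) = (m + 1 - r % 2) / 2 := by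
  intro m
  induction m with
  | zero =>
    simp only [Finset.range_zero, Finset.filter_empty, Finset.card_empty]
    omega
  | succ m ih =>
    rw [Finset.range_add_one, filter_insert]
    by_cases h : (m + r) % 2 = 0
    · rw [if_pos h, card_insert_of_notMem (by simp), ih]
      omega
    · rw [if_neg h, ih]
      omega

lemma total_sum : ∀ n : ℕ,
    (∑ i ∈ range n, ((n - 1 - i + 1 - i % 2) / 2 +
      (if i % 2 = 1 ∧ (n - 1 - i) % 2 = 1 then 1 else 0))) = n ^ 2 / 4 := by
  intro n
  induction n using Nat.strong_induction_on with
  | _ n ih =>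
  obtain _ | (_ | m) := n
  · simp
  · simp
  · rw [Finset.sum_range_succ', Finset.sum_range_succ']
    have hcongr : ∀ i ∈ range m,
        ((m + 2 - 1 - (i + 1 + 1) + 1 - (i + 1 + 1) % 2) / 2 +
          (if (i + 1 + 1) % 2 = 1 ∧ (m + 2 - 1 - (i + 1 + 1)) % 2 = 1 then 1 else 0)) =
        ((m - 1 - i + 1 - i % 2) / 2 + (if i % 2 = 1 ∧ (m - 1 - i) % 2 = 1 then 1 else 0)) := by
      intro i _
      have e1 : m + 2 - 1 - (i + 1 + 1) = m - 1 - i := by omega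
      have e2 : (i + 1 + 1) % 2 = i % 2 := by omega
      rw [e1, e2]
    rw [Finset.sum_congr rfl hcongr, ih m (by omega)]
    have h4 : (m + 1 + 1) ^ 2 = m ^ 2 + 4 * m + 4 := by ring
    norm_num
    split_ifs <;> omega

def Dset (n : ℕ) : Set (Fin n × Fin n) :=
  {v | (v.1.1 + v.2.1 + 2 ≤ n ∧ (v.1.1 + v.2.1) % 2 = 0) ∨
       (v.1.1 + v.2.1 + 1 = n ∧ v.1.1 % 2 = 1 ∧ v.2.1 % 2 = 1)}

open scoped Classical in
lemma Dset_ncard (n : ℕ) : (Dset n).ncard = n ^ 2 / 4 := by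
  classical
  have hset : Dset n = ↑(Finset.univ.filter (fun v : Fin n × Fin n =>
      (v.1.1 + v.2.1 + 2 ≤ n ∧ (v.1.1 + v.2.1) % 2 = 0) ∨
      (v.1.1 + v.2.1 + 1 = n ∧ v.1.1 % 2 = 1 ∧ v.2.1 % 2 = 1))) := by
    ext v
    simp [Dset]
  rw [hset, Set.ncard_coe_finset, Finset.card_filter, Fintype.sum_prod_type]
  have hrow : ∀ i : Fin n,
      (∑ j : Fin n, if ((i.1 + j.1 + 2 ≤ n ∧ (i.1 + j.1) % 2 = 0) ∨
          (i.1 + j.1 + 1 = n ∧ i.1 % 2 = 1 ∧ j.1 % 2 = 1)) then 1 else 0) =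
      ((n - 1 - i.1 + 1 - i.1 % 2) / 2 +
        (if i.1 % 2 = 1 ∧ (n - 1 - i.1) % 2 = 1 then 1 else 0)) := by
    intro i
    have hi : i.1 < n := i.2
    rw [Fin.sum_univ_eq_sum_range (fun jv => if ((i.1 + jv + 2 ≤ n ∧ (i.1 + jv) % 2 = 0) ∨
          (i.1 + jv + 1 = n ∧ i.1 % 2 = 1 ∧ jv % 2 = 1)) then 1 else 0) n]
    have hsplit : ∀ jv ∈ range n,
        (if ((i.1 + jv + 2 ≤ n ∧ (i.1 + jv) % 2 = 0) ∨
          (i.1 + jv + 1 = n ∧ i.1 % 2 = 1 ∧ jv % 2 = 1)) then (1:ℕ) else 0) =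
        (if (i.1 + jv + 2 ≤ n ∧ (i.1 + jv) % 2 = 0) then 1 else 0) +
        (if (i.1 + jv + 1 = n ∧ i.1 % 2 = 1 ∧ jv % 2 = 1) then 1 else 0) := by
      intro jv _
      split_ifs <;> omega
    rw [Finset.sum_congr rfl hsplit, Finset.sum_add_distrib]
    have hc1 : (∑ jv ∈ range n, if (i.1 + jv + 2 ≤ n ∧ (i.1 + jv) % 2 = 0) then (1:ℕ) else 0)
        = (n - 1 - i.1 + 1 - i.1 % 2) / 2 := by
      rw [← Finset.card_filter]
      have : (range n).filter (fun jv => i.1 + jv + 2 ≤ n ∧ (i.1 + jv) % 2 = 0) =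
          (range (n - 1 - i.1)).filter (fun jv => (jv + i.1) % 2 = 0) := by
        ext a
        simp only [mem_filter, mem_range]
        omega
      rw [this, parity_count]
    have hc2 : (∑ jv ∈ range n, if (i.1 + jv + 1 = n ∧ i.1 % 2 = 1 ∧ jv % 2 = 1) then (1:ℕ) else 0)
        = (if i.1 % 2 = 1 ∧ (n - 1 - i.1) % 2 = 1 then 1 else 0) := by
      rw [← Finset.card_filter]
      by_cases hc : i.1 % 2 = 1 ∧ (n - 1 - i.1) % 2 = 1
      · rw [if_pos hc]
        have : (range n).filter (fun jv => i.1 + jv + 1 = n ∧ i.1 % 2 = 1 ∧ jv % 2 = 1) =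
            {n - 1 - i.1} := by
          ext a
          simp only [mem_filter, mem_range, mem_singleton]
          omega
        rw [this, card_singleton]
      · rw [if_neg hc]
        have : (range n).filter (fun jv => i.1 + jv + 1 = n ∧ i.1 % 2 = 1 ∧ jv % 2 = 1) = ∅ := by
          ext a
          simp only [mem_filter, mem_range, notMem_empty, iff_false]
          omega
        rw [this, card_empty]
    rw [hc1, hc2]
  rw [Finset.sum_congr rfl (fun i _ => hrow i)]
  rw [Fin.sum_univ_eq_sum_range (fun iv => ((n - 1 - iv + 1 - iv % 2) / 2 +
      (if iv % 2 = 1 ∧ (n - 1 - iv) % 2 = 1 then 1 else 0))) n]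
  exact total_sum n




def Aset (n s : ℕ) : Set (Fin n × Fin n) := Dset n ∪ {v | v.1.1 + v.2.1 < s}

lemma Aset_swap (n s : ℕ) (a b : Fin n) : ((a, b) : Fin n × Fin n) ∈ Aset n s ↔ ((b, a) : Fin n × Fin n) ∈ Aset n s := by
  simp only [Aset, Dset, Set.mem_union, Set.mem_setOf_eq]
  omega

def fmk {n : ℕ} (hn : 0 < n) (u : ℕ) : Fin n := ⟨u % n, Nat.mod_lt u hn⟩

lemma fmk_val {n : ℕ} (hn : 0 < n) {u : ℕ} (hu : u < n) : (fmk hn u).1 = u :=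
  Nat.mod_eq_of_lt hu

open scoped Classical in
/-- row-count bound, hard phase : `s = i+j ≤ n-2`, `s` odd. -/
lemma card_row_ge {n : ℕ} (hn : 0 < n) (i j : Fin n)
    (h2 : i.1 + j.1 + 2 ≤ n) (hodd : (i.1 + j.1) % 2 = 1) :
    j.1 + (n - 1 - (i.1 + j.1)) / 2 + (if i.1 % 2 = 1 ∧ n % 2 = 1 then 1 else 0) ≤
    (Finset.univ.filter
      (fun u : Fin n => u ≠ j ∧ ((i, u) : Fin n × Fin n) ∈ Aset n (i.1 + j.1))).card := by
  classical
  set s := i.1 + j.1 with hs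
  set k := (n - 1 - s) / 2 with hk
  set P1 : Finset (Fin n) := (range j.1).image (fmk hn) with hP1
  set P2 : Finset (Fin n) := (range k).image (fun u => fmk hn (j.1 + 1 + 2*u)) with hP2
  set P3 : Finset (Fin n) := if i.1 % 2 = 1 ∧ n % 2 = 1 then {fmk hn (n - 1 - i.1)} else ∅ with hP3
  have hj : j.1 < n := j.2
  have hi : i.1 < n := i.2
  -- value facts
  have hv1 : ∀ u ∈ P1, (u : Fin n).1 < j.1 := by
    intro u hu
    simp only [hP1, mem_image, mem_range] at hu
    obtain ⟨a, ha, rfl⟩ := hu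
    rw [fmk_val hn (by omega)]; exact ha
  have hv2 : ∀ u ∈ P2, j.1 < (u : Fin n).1 ∧ (u:Fin n).1 + i.1 + 2 ≤ n ∧ (i.1 + (u:Fin n).1) % 2 = 0 := by
    intro u hu
    simp only [hP2, mem_image, mem_range] at hu
    obtain ⟨a, ha, rfl⟩ := hu
    rw [fmk_val hn (by omega)]
    omega
  have hv3 : ∀ u ∈ P3, (u : Fin n).1 = n - 1 - i.1 ∧ i.1 % 2 = 1 ∧ n % 2 = 1 := by
    intro u hu
    simp only [hP3] at hu
    by_cases hc : i.1 % 2 = 1 ∧ n % 2 = 1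
    · rw [if_pos hc, mem_singleton] at hu
      subst hu
      exact ⟨fmk_val hn (by omega), hc⟩
    · rw [if_neg hc] at hu; exact absurd hu (notMem_empty _)
  -- subset of the filter
  have hsub : P1 ∪ P2 ∪ P3 ⊆ Finset.univ.filter
      (fun u : Fin n => u ≠ j ∧ ((i, u) : Fin n × Fin n) ∈ Aset n s) := by
    intro u hu
    have hmem : u.1 < j.1 ∨ (j.1 < u.1 ∧ u.1 + i.1 + 2 ≤ n ∧ (i.1 + u.1) % 2 = 0) ∨
        (u.1 = n - 1 - i.1 ∧ i.1 % 2 = 1 ∧ n % 2 = 1) := by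
      rcases mem_union.1 hu with h | h
      · rcases mem_union.1 h with h' | h'
        · exact Or.inl (hv1 u h')
        · exact Or.inr (Or.inl (hv2 u h'))
      · exact Or.inr (Or.inr (hv3 u h))
    rw [mem_filter]
    refine ⟨mem_univ _, ⟨fun h => absurd (congrArg Fin.val h) (by omega), ?_⟩⟩
    simp only [Aset, Dset, Set.mem_union, Set.mem_setOf_eq]
    omega
  -- cards
  have hc1 : P1.card = j.1 := by
    rw [hP1, Finset.card_image_of_injOn, card_range]
    intro a ha b hb hab
    rw [mem_coe, mem_range] at ha hb
    have := congrArg Fin.val hab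
    rwa [fmk_val hn (by omega), fmk_val hn (by omega)] at this
  have hc2 : P2.card = k := by
    rw [hP2, Finset.card_image_of_injOn, card_range]
    intro a ha b hb hab
    rw [mem_coe, mem_range] at ha hb
    have := congrArg Fin.val hab
    rw [fmk_val hn (by omega), fmk_val hn (by omega)] at this
    omega
  have hc3 : P3.card = if i.1 % 2 = 1 ∧ n % 2 = 1 then 1 else 0 := by
    rw [hP3]
    by_cases hc : i.1 % 2 = 1 ∧ n % 2 = 1 <;> simp [hc]
  have hd12 : Disjoint P1 P2 := by
    rw [Finset.disjoint_left]
    intro u h1 h2'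
    have := hv1 u h1; have := hv2 u h2'
    omega
  have hd3 : Disjoint (P1 ∪ P2) P3 := by
    rw [Finset.disjoint_left]
    intro u h1 h2'
    have h3 := hv3 u h2'
    rcases mem_union.1 h1 with h | h
    · have := hv1 u h; omega
    · have := hv2 u h; omega
  calc j.1 + (n - 1 - s) / 2 + (if i.1 % 2 = 1 ∧ n % 2 = 1 then 1 else 0)
      = (P1 ∪ P2 ∪ P3).card := by
        rw [card_union_of_disjoint hd3, card_union_of_disjoint hd12, hc1, hc2, hc3]
    _ ≤ _ := Finset.card_le_card hsub


open scoped Classical in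
lemma card_row_ge_easy {n : ℕ} (hn : 0 < n) (i j : Fin n) (s : ℕ) :
    j.1 ≤ (Finset.univ.filter
      (fun u : Fin n => u ≠ j ∧ ((i, u) : Fin n × Fin n) ∈ Aset n (i.1 + j.1))).card := by
  have hj : j.1 < n := j.2
  have hsub : (range j.1).image (fmk hn) ⊆ Finset.univ.filter
      (fun u : Fin n => u ≠ j ∧ ((i, u) : Fin n × Fin n) ∈ Aset n (i.1 + j.1)) := by
    intro u hu
    simp only [mem_image, mem_range] at hu
    obtain ⟨a, ha, rfl⟩ := hu
    have hval : (fmk hn a).1 = a := fmk_val hn (by omega)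
    rw [mem_filter]
    refine ⟨mem_univ _, ⟨fun h => absurd (congrArg Fin.val h) (by omega), ?_⟩⟩
    simp only [Aset, Dset, Set.mem_union, Set.mem_setOf_eq]
    omega
  calc j.1 = ((range j.1).image (fmk hn)).card := by
        rw [Finset.card_image_of_injOn, card_range]
        intro a ha b hb hab
        rw [mem_coe, mem_range] at ha hb
        have := congrArg Fin.val hab
        rwa [fmk_val hn (by omega), fmk_val hn (by omega)] at this
    _ ≤ _ := Finset.card_le_card hsub

open scoped Classical in
lemma cascade (n : ℕ) (s : ℕ) :
    Aset n (s + 1) ⊆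
      activationStep ((⊤ : SimpleGraph (Fin n)) □ (⊤ : SimpleGraph (Fin n)))
        (fun _ => n - 1) (Aset n s) := by
  rintro ⟨i, j⟩ hv
  by_cases hA : ((i, j) : Fin n × Fin n) ∈ Aset n s
  · exact Or.inl hA
  have hnD : ((i, j) : Fin n × Fin n) ∉ Dset n := fun h => hA (Or.inl h)
  have hss : i.1 + j.1 = s := by
    rcases hv with h | h
    · exact absurd (Or.inl h) hA
    · have h2 : ¬ (i.1 + j.1 < s) := fun hc => hA (Or.inr hc)
      simp only [Set.mem_setOf_eq] at h
      omega
  refine Or.inr ?_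
  show (n - 1 : ℕ) ≤ _
  have hn : 0 < n := i.pos
  set Frow := (Finset.univ.filter
      (fun u : Fin n => u ≠ j ∧ ((i, u) : Fin n × Fin n) ∈ Aset n s)).image
      (fun u => ((i, u) : Fin n × Fin n)) with hFrow
  set Fcol := (Finset.univ.filter
      (fun u : Fin n => u ≠ i ∧ ((u, j) : Fin n × Fin n) ∈ Aset n s)).image
      (fun u => ((u, j) : Fin n × Fin n)) with hFcol
  have hrowcard : Frow.card = (Finset.univ.filter
      (fun u : Fin n => u ≠ j ∧ ((i, u) : Fin n × Fin n) ∈ Aset n s)).card := by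
    apply Finset.card_image_of_injOn
    intro a _ b _ hab
    exact (Prod.mk.injEq _ _ _ _ ▸ hab).2
  have hcolcard : Fcol.card = (Finset.univ.filter
      (fun u : Fin n => u ≠ i ∧ ((u, j) : Fin n × Fin n) ∈ Aset n s)).card := by
    apply Finset.card_image_of_injOn
    intro a _ b _ hab
    exact (Prod.mk.injEq _ _ _ _ ▸ hab).1
  have hdisj : Disjoint Frow Fcol := by
    rw [Finset.disjoint_left]
    rintro p hp hq
    simp only [hFrow, mem_image, mem_filter] at hp
    simp only [hFcol, mem_image, mem_filter] at hq
    obtain ⟨u, ⟨_, hu, _⟩, rfl⟩ := hp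
    obtain ⟨w, ⟨_, hw, _⟩, heq⟩ := hq
    exact hu ((Prod.mk.injEq _ _ _ _ ▸ heq.symm).2.symm ▸ rfl)
  have hsubF : (↑(Frow ∪ Fcol) : Set (Fin n × Fin n)) ⊆
      (((⊤ : SimpleGraph (Fin n)) □ (⊤ : SimpleGraph (Fin n))).neighborSet (i, j)) ∩ Aset n s := by
    intro p hp
    rw [Finset.coe_union, Set.mem_union] at hp
    rcases hp with hp | hp
    · rw [Finset.mem_coe, hFrow, mem_image] at hp
      obtain ⟨u, hu, rfl⟩ := hp
      rw [mem_filter] at hu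
      refine ⟨?_, hu.2.2⟩
      rw [SimpleGraph.mem_neighborSet, SimpleGraph.boxProd_adj]
      refine Or.inr ⟨?_, rfl⟩
      simp only [SimpleGraph.top_adj]
      exact fun h => hu.2.1 h.symm
    · rw [Finset.mem_coe, hFcol, mem_image] at hp
      obtain ⟨u, hu, rfl⟩ := hp
      rw [mem_filter] at hu
      refine ⟨?_, hu.2.2⟩
      rw [SimpleGraph.mem_neighborSet, SimpleGraph.boxProd_adj]
      refine Or.inl ⟨?_, rfl⟩
      simp only [SimpleGraph.top_adj]
      exact fun h => hu.2.1 h.symm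
  have hcount : n - 1 ≤ (Frow ∪ Fcol).card := by
    rw [card_union_of_disjoint hdisj, hrowcard, hcolcard]
    have hpred : (Finset.univ.filter
        (fun u : Fin n => u ≠ i ∧ ((j, u) : Fin n × Fin n) ∈ Aset n (j.1 + i.1))) =
        (Finset.univ.filter
        (fun u : Fin n => u ≠ i ∧ ((u, j) : Fin n × Fin n) ∈ Aset n s)) := by
      apply Finset.filter_congr
      intro u _
      rw [show j.1 + i.1 = s by omega, Aset_swap]
    by_cases hphase : n ≤ s + 1
    · -- easy phase : i + j = s ≥ n - 1
      have h1 := card_row_ge_easy hn i j s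
      have h2 := card_row_ge_easy hn j i s
      rw [hss] at h1
      rw [hpred] at h2
      omega
    · -- hard phase
      simp only [Dset, Set.mem_setOf_eq] at hnD
      have h1 := card_row_ge hn i j (by omega) (by omega)
      rw [hss] at h1
      have h2 := card_row_ge hn j i (by omega) (by omega)
      rw [hpred] at h2
      split_ifs at h1 h2 <;> omega
  calc (n - 1 : ℕ) ≤ (Frow ∪ Fcol).card := hcount
    _ = (↑(Frow ∪ Fcol) : Set (Fin n × Fin n)).ncard := (Set.ncard_coe_finset _).symm
    _ ≤ _ := Set.ncard_le_ncard hsubF (Set.toFinite _)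


open scoped Classical in
lemma isDynamo_Dset (n : ℕ) :
    IsDynamo ((⊤ : SimpleGraph (Fin n)) □ (⊤ : SimpleGraph (Fin n))) (fun _ => n - 1)
      (Dset n) := by
  refine ⟨2 * n, ?_⟩
  have hsub : ∀ s, Aset n s ⊆
      (activationStep ((⊤ : SimpleGraph (Fin n)) □ (⊤ : SimpleGraph (Fin n)))
        (fun _ => n - 1))^[s] (Dset n) := by
    intro s
    induction s with
    | zero =>
      rintro v (h | h)
      · exact h
      · simp only [Set.mem_setOf_eq] at h; omega
    | succ s ih =>
      intro v hv
      rw [Function.iterate_succ_apply']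
      exact activationStep_mono _ _ ih (cascade n s hv)
  apply Set.eq_univ_of_univ_subset
  intro v _
  refine hsub (2 * n) (Or.inr ?_)
  have h1 := v.1.2
  have h2 := v.2.2
  simp only [Set.mem_setOf_eq]
  omega

end Stmt14

/-- The minimum size of a dynamic monopoly of `Kₙ □ Kₙ` with every vertex having
threshold `n − 1` equals `⌊n²/4⌋`. -/
theorem stmt14 (n : ℕ) :
    dyn ((⊤ : SimpleGraph (Fin n)) □ (⊤ : SimpleGraph (Fin n))) (fun _ => n - 1)
      = n ^ 2 / 4 := by
  rcases Nat.eq_zero_or_pos n with rfl | hn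
  · have h0 : IsDynamo ((⊤ : SimpleGraph (Fin 0)) □ (⊤ : SimpleGraph (Fin 0)))
        (fun _ => 0 - 1) (∅ : Set (Fin 0 × Fin 0)) := by
      refine ⟨0, ?_⟩
      rw [Set.eq_univ_iff_forall]
      exact fun a => a.1.elim0
    have : dyn ((⊤ : SimpleGraph (Fin 0)) □ (⊤ : SimpleGraph (Fin 0))) (fun _ => 0 - 1) ≤ 0 :=
      Nat.sInf_le ⟨∅, by simp, h0⟩
    omega
  · apply le_antisymm
    · exact Nat.sInf_le ⟨Stmt14.Dset n, Stmt14.Dset_ncard n, Stmt14.isDynamo_Dset n⟩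
    · unfold dyn
      have hmem : (n ^ 2 / 4) ∈ {k : ℕ | ∃ D : Set (Fin n × Fin n), D.ncard = k ∧
          IsDynamo ((⊤ : SimpleGraph (Fin n)) □ (⊤ : SimpleGraph (Fin n))) (fun _ => n - 1) D} :=
        ⟨Stmt14.Dset n, Stmt14.Dset_ncard n, Stmt14.isDynamo_Dset n⟩
      refine le_csInf ⟨_, hmem⟩ ?_
      rintro k ⟨D, rfl, hdyn⟩
      have hcond : (n - 1) + 2 ≤ 2 * min (Fintype.card (Fin n)) (Fintype.card (Fin n)) := by
        simp only [Fintype.card_fin, min_self]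
        omega
      have := lower_bound (n - 1) D hcond hdyn
      rwa [Nat.sub_add_cancel hn] at this
end

section
/- Let X₁,…,Xₙ be nonnegative independent random variables and X = ∑Xᵢ. Then for any λ ≥ 0, P(X ≤ E[X] − λ) ≤ exp(−λ²/(2∑ᵢE[Xᵢ²])). -/
open MeasureTheory ProbabilityTheory

private lemma exp_mul_le_quad {t x : ℝ} (ht : t ≤ 0) (hx : 0 ≤ x) :
    Real.exp (t * x) ≤ 1 + t * x + (t * x) ^ 2 / 2 := by
  set u : ℝ := -(t * x) with hu
  have hu0 : 0 ≤ u := by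
    have : t * x ≤ 0 := mul_nonpos_of_nonpos_of_nonneg ht hx
    simpa [hu] using neg_nonneg.mpr this
  have h1 : 1 + u + u ^ 2 / 2 ≤ Real.exp u := Real.quadratic_le_exp_of_nonneg hu0
  have hpos : 0 < Real.exp u := Real.exp_pos u
  have hmul : Real.exp (t * x) * Real.exp u = 1 := by
    rw [← Real.exp_add]; simp [hu]
  have hc : 0 ≤ 1 - u + u ^ 2 / 2 := by nlinarith [sq_nonneg (u - 1)]
  have hq : 1 ≤ (1 - u + u ^ 2 / 2) * Real.exp u := by
    have h2 : (1 - u + u ^ 2 / 2) * (1 + u + u ^ 2 / 2) ≤ (1 - u + u ^ 2 / 2) * Real.exp u :=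
      mul_le_mul_of_nonneg_left h1 hc
    nlinarith [pow_le_pow_left₀ hu0 (le_refl u) 4, sq_nonneg (u ^ 2)]
  have : Real.exp (t * x) ≤ 1 - u + u ^ 2 / 2 := by
    rw [← mul_le_mul_iff_left₀ hpos, hmul]; exact hq
  have heq : 1 + t * x + (t * x) ^ 2 / 2 = 1 - u + u ^ 2 / 2 := by rw [hu]; ring
  linarith [this]

private lemma mgf_le_aux {Ω : Type*} {mΩ : MeasurableSpace Ω} {μ : Measure Ω}
    [IsProbabilityMeasure μ] {Y : Ω → ℝ} (hm : Measurable Y) (hnn : ∀ ω, 0 ≤ Y ω)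
    (hint : Integrable (fun ω => Y ω ^ 2) μ) {t : ℝ} (ht : t ≤ 0) :
    mgf Y μ t ≤ Real.exp (t * ∫ ω, Y ω ∂μ + t ^ 2 / 2 * ∫ ω, Y ω ^ 2 ∂μ) := by
  have hYint : Integrable Y μ := by
    refine Integrable.mono (hint.add (integrable_const 1)) hm.aestronglyMeasurable
      (Filter.Eventually.of_forall fun ω => ?_)
    have h := hnn ω
    simp only [Pi.add_apply, Real.norm_eq_abs]
    rw [abs_of_nonneg h, abs_of_nonneg (by positivity : (0:ℝ) ≤ Y ω ^ 2 + 1)]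
    nlinarith [sq_nonneg (Y ω - 1)]
  have hquad : Integrable (fun ω => 1 + t * Y ω + (t * Y ω) ^ 2 / 2) μ := by
    have : Integrable (fun ω => (t * Y ω) ^ 2 / 2) μ := by
      have := (hint.const_mul (t ^ 2 / 2))
      refine this.congr (Filter.Eventually.of_forall fun ω => ?_)
      ring
    exact ((integrable_const 1).add (hYint.const_mul t)).add this
  have hexp_int : Integrable (fun ω => Real.exp (t * Y ω)) μ := by
    refine Integrable.mono' (integrable_const 1) (hm.const_mul t).exp.aestronglyMeasurable
      (Filter.Eventually.of_forall fun ω => ?_)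
    rw [Real.norm_eq_abs, abs_of_nonneg (Real.exp_pos _).le]
    exact Real.exp_le_one_iff.mpr (mul_nonpos_of_nonpos_of_nonneg ht (hnn ω))
  have h1 : mgf Y μ t ≤ ∫ ω, (1 + t * Y ω + (t * Y ω) ^ 2 / 2) ∂μ := by
    refine integral_mono hexp_int hquad fun ω => exp_mul_le_quad ht (hnn ω)
  have h2 : ∫ ω, (1 + t * Y ω + (t * Y ω) ^ 2 / 2) ∂μ
      = 1 + (t * ∫ ω, Y ω ∂μ + t ^ 2 / 2 * ∫ ω, Y ω ^ 2 ∂μ) := by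
    have : ∀ ω, 1 + t * Y ω + (t * Y ω) ^ 2 / 2
        = 1 + (t * Y ω + t ^ 2 / 2 * Y ω ^ 2) := fun ω => by ring
    simp_rw [this]
    have hA : Integrable (fun ω => t * Y ω) μ := hYint.const_mul t
    have hB : Integrable (fun ω => t ^ 2 / 2 * Y ω ^ 2) μ := hint.const_mul _
    have hAB : Integrable (fun ω => t * Y ω + t ^ 2 / 2 * Y ω ^ 2) μ := hA.add hB
    rw [integral_add (integrable_const 1) hAB, integral_add hA hB, integral_const,
      integral_const_mul, integral_const_mul]
    simp
  rw [h2] at h1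
  calc mgf Y μ t ≤ 1 + (t * ∫ ω, Y ω ∂μ + t ^ 2 / 2 * ∫ ω, Y ω ^ 2 ∂μ) := h1
    _ ≤ Real.exp (t * ∫ ω, Y ω ∂μ + t ^ 2 / 2 * ∫ ω, Y ω ^ 2 ∂μ) := by
        rw [add_comm]; exact Real.add_one_le_exp _

/-- McDiarmid's lower-tail inequality: if `X₁, …, Xₙ` are nonnegative independent random
variables and `X = ∑ Xᵢ`, then for every `λ ≥ 0`,
`P(X ≤ E[X] − λ) ≤ exp(−λ²/(2 ∑ E[Xᵢ²]))`. -/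
theorem stmt16 {Ω : Type*} {mΩ : MeasurableSpace Ω} (μ : Measure Ω)
    [IsProbabilityMeasure μ] (n : ℕ) (X : Fin n → Ω → ℝ)
    (hmeas : ∀ i, Measurable (X i))
    (hnonneg : ∀ i ω, 0 ≤ X i ω)
    (hind : iIndepFun X μ)
    (hint : ∀ i, Integrable (fun ω => X i ω ^ 2) μ)
    (lam : ℝ) (hlam : 0 ≤ lam) :
    (μ {ω | ∑ i, X i ω ≤ (∑ i, ∫ ω', X i ω' ∂μ) - lam}).toReal
      ≤ Real.exp (-(lam ^ 2) / (2 * ∑ i, ∫ ω', X i ω' ^ 2 ∂μ)) := by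
  set M : ℝ := ∑ i, ∫ ω', X i ω' ∂μ with hM
  set S : ℝ := ∑ i, ∫ ω', X i ω' ^ 2 ∂μ with hS
  have hS0 : 0 ≤ S :=
    Finset.sum_nonneg fun i _ => integral_nonneg fun ω => sq_nonneg _
  have hle1 : (μ {ω | ∑ i, X i ω ≤ M - lam}).toReal ≤ 1 := by
    have h := prob_le_one (μ := μ) (s := {ω | ∑ i, X i ω ≤ M - lam})
    simpa using ENNReal.toReal_mono ENNReal.one_ne_top h
  rcases hS0.eq_or_lt with hSzero | hSpos
  · rw [← hSzero]
    simpa using hle1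
  -- main case
  set t : ℝ := -lam / S with hTdef
  have ht : t ≤ 0 := div_nonpos_iff.mpr (Or.inr ⟨neg_nonpos.mpr hlam, hSpos.le⟩)
  have hsumfun : (∑ i, X i) = fun ω => ∑ i, X i ω := by
    ext ω; simp [Finset.sum_apply]
  have hsum_meas : Measurable (∑ i, X i) := by
    rw [hsumfun]; exact Finset.measurable_sum _ fun i _ => hmeas i
  have hexp_sum_int : Integrable (fun ω => Real.exp (t * (∑ i, X i) ω)) μ := by
    refine Integrable.mono' (integrable_const 1)
      (hsum_meas.const_mul t).exp.aestronglyMeasurable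
      (Filter.Eventually.of_forall fun ω => ?_)
    rw [Real.norm_eq_abs, abs_of_nonneg (Real.exp_pos _).le]
    refine Real.exp_le_one_iff.mpr (mul_nonpos_of_nonpos_of_nonneg ht ?_)
    simp only [Finset.sum_apply]
    exact Finset.sum_nonneg fun i _ => hnonneg i ω
  have hset : {ω | ∑ i, X i ω ≤ M - lam} = {ω | (∑ i, X i) ω ≤ M - lam} := by
    ext ω; simp [Finset.sum_apply]
  have hchern := measure_le_le_exp_mul_mgf (μ := μ) (X := ∑ i, X i) (M - lam) ht hexp_sum_int
  rw [hset]
  refine le_trans hchern ?_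
  have hmgf : mgf (∑ i, X i) μ t = ∏ i, mgf (X i) μ t :=
    hind.mgf_sum hmeas Finset.univ
  have hprod : ∏ i, mgf (X i) μ t
      ≤ ∏ i, Real.exp (t * ∫ ω', X i ω' ∂μ + t ^ 2 / 2 * ∫ ω', X i ω' ^ 2 ∂μ) := by
    refine Finset.prod_le_prod (fun i _ => mgf_nonneg) fun i _ =>
      mgf_le_aux (hmeas i) (hnonneg i) (hint i) ht
  have hprodexp : ∏ i, Real.exp (t * ∫ ω', X i ω' ∂μ + t ^ 2 / 2 * ∫ ω', X i ω' ^ 2 ∂μ)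
      = Real.exp (t * M + t ^ 2 / 2 * S) := by
    rw [← Real.exp_sum]
    congr 1
    rw [hM, hS, Finset.sum_add_distrib, ← Finset.mul_sum, ← Finset.mul_sum]
  calc Real.exp (-t * (M - lam)) * mgf (∑ i, X i) μ t
      ≤ Real.exp (-t * (M - lam)) * Real.exp (t * M + t ^ 2 / 2 * S) := by
        rw [hmgf]
        exact mul_le_mul_of_nonneg_left (hprod.trans_eq hprodexp) (Real.exp_pos _).le
    _ = Real.exp (t * lam + t ^ 2 / 2 * S) := by rw [← Real.exp_add]; ring_nf
    _ = Real.exp (-(lam ^ 2) / (2 * S)) := by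
        congr 1
        rw [hTdef]
        field_simp
        ring
end

section
/- Let F be a family of graphs with threshold assignments such that there is a constant δ > 0 with min{τ(v) : v ∈ V(G)} ≥ ε(G) + δ for every G ∈ F, where ε(G) = |E(G)|/|V(G)|. Then F is dynamo-unbounded: there exists a function f with f(x) → ∞ as x → ∞ such that dyn(G) ≥ f(|V(G)|) for every G ∈ F (indeed one may take f(n) = nδ/t_max when thresholds are bounded, or directly dyn(G) ≥ |V(G)|(1 − ε(G)/min τ) ≥ |V(G)|·δ/(ε(G)+δ)). -/
open SimpleGraph

lemma dynamo_min_le {V : Type*} [Fintype V] (G : SimpleGraph V) (τ : V → ℕ)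
    (D : Set V) (hD : IsDynamo G τ D) (hne : D ≠ Set.univ) :
    ∃ v, v ∉ D ∧ τ v ≤ D.ncard := by
  classical
  by_contra hcon
  push_neg at hcon
  have hfix : activationStep G τ D = D := by
    rw [activationStep, Set.union_eq_self_of_subset_right]
    intro v hv
    simp only [Set.mem_setOf_eq] at hv
    by_contra hvD
    exact absurd (hv.trans (Set.ncard_le_ncard Set.inter_subset_right (Set.toFinite D)))
      (not_le.mpr (hcon v hvD))
  obtain ⟨j, hj⟩ := hD
  rw [Function.iterate_fixed hfix j] at hj
  exact hne hj

lemma dynamo_edge_bound {V : Type*} [Fintype V] (G : SimpleGraph V) (τ : V → ℕ)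
    (D : Set V) (hD : IsDynamo G τ D) (t : ℕ) (ht : ∀ v, t ≤ τ v) :
    (Fintype.card V - D.ncard) * t ≤ G.edgeSet.ncard := by
  classical
  obtain ⟨J, hJ⟩ := hD
  have hmem : ∀ v : V, ∃ i, v ∈ (activationStep G τ)^[i] D := by
    intro v; exact ⟨J, hJ ▸ Set.mem_univ v⟩
  set step := activationStep G τ with hstepdef
  let time : V → ℕ := fun v => Nat.find (hmem v)
  have htime_mem : ∀ v, v ∈ step^[time v] D := fun v => Nat.find_spec (hmem v)
  have htime_pos : ∀ v, v ∉ D → 0 < time v := by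
    intro v hv
    rcases Nat.eq_zero_or_pos (time v) with h0 | h
    · have hm := htime_mem v
      rw [h0] at hm
      exact absurd hm hv
    · exact h
  have htime_le : ∀ u i, u ∈ step^[i] D → time u ≤ i := fun u i h => Nat.find_min' (hmem u) h
  have hkey : ∀ v, v ∉ D → τ v ≤ (G.neighborSet v ∩ step^[time v - 1] D).ncard := by
    intro v hv
    have h1 : time v - 1 + 1 = time v := Nat.succ_pred_eq_of_pos (htime_pos v hv)
    have h2 : v ∈ step^[time v - 1 + 1] D := by rw [h1]; exact htime_mem v
    rw [Function.iterate_succ_apply'] at h2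
    have h3 : v ∉ step^[time v - 1] D := by
      intro h
      exact absurd (htime_le v _ h) (by omega)
    rcases h2 with h | h
    · exact absurd h h3
    · exact h
  -- the set of "activation pairs"
  let P : Finset (V × V) := Finset.univ.filter
    (fun p => p.1 ∉ D ∧ G.Adj p.1 p.2 ∧ time p.2 < time p.1)
  let Dc : Finset V := Finset.univ.filter (fun v => v ∉ D)
  -- card of Dc
  have hDc : Fintype.card V - D.ncard ≤ Dc.card := by
    have : D.ncard = D.toFinset.card := Set.ncard_eq_toFinset_card' D
    have hcompl : Dc = D.toFinsetᶜ := by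
      ext v; simp [Dc, Set.mem_toFinset]
    rw [hcompl, Finset.card_compl, this]
  -- step 1: Dc.card * t ≤ ∑ τ
  have hsum1 : Dc.card * t ≤ ∑ v ∈ Dc, τ v := by
    calc Dc.card * t = ∑ _v ∈ Dc, t := by rw [Finset.sum_const, smul_eq_mul, mul_comm]
    _ ≤ ∑ v ∈ Dc, τ v := Finset.sum_le_sum (fun v _ => ht v)
  -- step 2: ∑ τ ≤ P.card
  have hsum2 : ∑ v ∈ Dc, τ v ≤ P.card := by
    have hfib : P.card = ∑ v ∈ Dc, (P.filter (fun p => p.1 = v)).card := by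
      apply Finset.card_eq_sum_card_fiberwise
      intro p hp
      simp only [P, Finset.mem_coe, Finset.mem_filter, Finset.mem_univ, true_and] at hp
      simp [Dc, hp.1]
    rw [hfib]
    apply Finset.sum_le_sum
    intro v hv
    have hvD : v ∉ D := by simpa [Dc] using hv
    refine le_trans (hkey v hvD) ?_
    rw [Set.ncard_eq_toFinset_card']
    apply Finset.card_le_card_of_injOn (fun u => (v, u))
    · intro u hu
      rw [Finset.mem_coe, Set.mem_toFinset] at hu
      obtain ⟨hadj, humem⟩ := hu
      have : time u < time v := lt_of_le_of_lt (htime_le u _ humem) (by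
        have := htime_pos v hvD; omega)
      exact Finset.mem_filter.mpr ⟨Finset.mem_filter.mpr ⟨Finset.mem_univ _, hvD, hadj, this⟩, rfl⟩
    · intro a _ b _ hab
      exact (Prod.mk.injEq _ _ _ _ ▸ hab).2
  -- step 3: P.card ≤ edgeSet.ncard
  have hsum3 : P.card ≤ G.edgeSet.ncard := by
    rw [Set.ncard_eq_toFinset_card']
    refine Finset.card_le_card_of_injOn (s := P) (t := G.edgeSet.toFinset) (fun p : V × V => s(p.1, p.2)) ?_ ?_
    · intro p hp
      simp only [P, Finset.mem_coe, Finset.mem_filter, Finset.mem_univ, true_and] at hp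
      rw [Finset.mem_coe, Set.mem_toFinset, mem_edgeSet]
      exact hp.2.1
    · intro p hp q hq hpq
      simp only [P, Finset.coe_filter, Finset.mem_univ, Set.mem_setOf_eq, true_and] at hp hq
      rw [Sym2.mk_eq_mk_iff] at hpq
      rcases hpq with h | h
      · exact h
      · exfalso
        have h1 : p.1 = q.2 := by rw [h]; rfl
        have h2 : p.2 = q.1 := by rw [h]; rfl
        have hp' := hp.2.2
        have hq' := hq.2.2
        rw [h1, h2] at hp'
        omega
  calc (Fintype.card V - D.ncard) * t ≤ Dc.card * t := Nat.mul_le_mul_right t hDc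
  _ ≤ ∑ v ∈ Dc, τ v := hsum1
  _ ≤ P.card := hsum2
  _ ≤ G.edgeSet.ncard := hsum3

lemma sqrt_cast_tendsto (δ : ℝ) (hδ : 0 < δ) :
    Filter.Tendsto (fun n : ℕ => Real.sqrt (δ * n)) Filter.atTop Filter.atTop := by
  rw [Filter.tendsto_atTop_atTop]
  intro b
  obtain ⟨N, hN⟩ := exists_nat_ge (b * b / δ)
  refine ⟨N, fun n hn => ?_⟩
  have h1 : b * b ≤ δ * n := by
    have hc : (N:ℝ) ≤ n := by exact_mod_cast hn
    have h2 : b*b/δ ≤ (n:ℝ) := hN.trans hc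
    calc b*b = (b*b/δ)*δ := by field_simp
      _ ≤ (n:ℝ) * δ := mul_le_mul_of_nonneg_right h2 hδ.le
      _ = δ * n := mul_comm _ _
  calc b ≤ Real.sqrt (b*b) := by
        rcases le_or_gt b 0 with h|h
        · exact h.trans (Real.sqrt_nonneg _)
        · rw [Real.sqrt_mul_self h.le]
    _ ≤ Real.sqrt (δ * n) := Real.sqrt_le_sqrt h1

open Filter

/-- If every member `(G j, τ j)` of a family of graphs with threshold assignments satisfies
`min τ ≥ ε(G) + δ` for a fixed constant `δ > 0`, then the family is dynamo-unbounded: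
there is `f : ℕ → ℝ` with `f → ∞` and `dyn(G j) ≥ f(|V(G j)|)` for every member. -/
theorem stmt17 {ι : Type*} (W : ι → Type*) [∀ j, Fintype (W j)] [∀ j, Nonempty (W j)]
    (G : ∀ j, SimpleGraph (W j)) (τ : ∀ j, W j → ℕ)
    (hτpos : ∀ j v, 0 < τ j v)
    (hτdeg : ∀ j v, τ j v ≤ ((G j).neighborSet v).ncard)
    (δ : ℝ) (hδ : 0 < δ)
    (hmin : ∀ j, ((G j).edgeSet.ncard : ℝ) / (Fintype.card (W j)) + δ
      ≤ (sInf (Set.range (τ j)) : ℕ)) :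
    ∃ f : ℕ → ℝ, Tendsto f atTop atTop ∧
      ∀ j, f (Fintype.card (W j)) ≤ dyn (G j) (τ j) := by
  classical
  refine ⟨fun n => Real.sqrt (δ * n), ?_, ?_⟩
  · exact sqrt_cast_tendsto δ hδ
  · intro j
    set n := Fintype.card (W j) with hn
    set t := sInf (Set.range (τ j)) with hT
    have ht_le : ∀ v, t ≤ τ j v := fun v => Nat.sInf_le ⟨v, rfl⟩
    have hn_pos : (0:ℝ) < n := by
      have := Fintype.card_pos (α := W j)
      exact_mod_cast this
    have htn : (t : ℝ) ≤ n := by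
      obtain ⟨v0⟩ := ‹∀ j, Nonempty (W j)› j
      have h1 : t ≤ τ j v0 := ht_le v0
      have h2 : τ j v0 ≤ ((G j).neighborSet v0).ncard := hτdeg j v0
      have h3 : ((G j).neighborSet v0).ncard ≤ n := by
        have := Set.ncard_le_ncard (Set.subset_univ ((G j).neighborSet v0)) (Set.toFinite _)
        rwa [Set.ncard_univ, Nat.card_eq_fintype_card] at this
      exact_mod_cast h1.trans (h2.trans h3)
    have hEn : (0:ℝ) ≤ ((G j).edgeSet.ncard : ℝ) / n := by positivity
    have hδt : δ ≤ (t:ℝ) := by have := hmin j; rw [← hn, ← hT] at this; linarith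
    have hSne : {k : ℕ | ∃ D : Set (W j), D.ncard = k ∧ IsDynamo (G j) (τ j) D}.Nonempty :=
      ⟨(Set.univ : Set (W j)).ncard, Set.univ, rfl, ⟨0, rfl⟩⟩
    obtain ⟨D, hDcard, hDdyn⟩ := Nat.sInf_mem hSne
    set d := dyn (G j) (τ j) with hd
    by_cases hDu : D = Set.univ
    · have hdn : d = n := by
        have h1 : D.ncard = d := hDcard
        rw [hDu, Set.ncard_univ, Nat.card_eq_fintype_card] at h1
        exact h1.symm
      rw [hdn]
      have hδn : δ ≤ (n:ℝ) := hδt.trans htn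
      calc Real.sqrt (δ * n) ≤ Real.sqrt (n * n) :=
            Real.sqrt_le_sqrt (by nlinarith)
        _ = n := Real.sqrt_mul_self hn_pos.le
    · obtain ⟨v, hv, hvt⟩ := dynamo_min_le _ _ D hDdyn hDu
      have hDd : D.ncard = d := hDcard
      have ht_d : t ≤ d := (ht_le v).trans (hDd ▸ hvt)
      have hedge := dynamo_edge_bound _ _ D hDdyn t ht_le
      have hdn : D.ncard ≤ n := by
        have := Set.ncard_le_ncard (Set.subset_univ D) (Set.toFinite _)
        rwa [Set.ncard_univ, Nat.card_eq_fintype_card] at this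
      set E := (G j).edgeSet.ncard with hE
      have hreal : ((n:ℝ) - d) * t ≤ E := by
        rw [← hDd]
        have h1 : (n - D.ncard) * t ≤ E := hedge
        have hq : (((n - D.ncard : ℕ)) : ℝ) * t ≤ E := by exact_mod_cast h1
        rwa [Nat.cast_sub hdn] at hq
      have hEle : (E:ℝ) ≤ n * ((t:ℝ) - δ) := by
        have hm := hmin j
        rw [← hn, ← hT, ← hE] at hm
        have h1 : (E:ℝ)/n ≤ (t:ℝ) - δ := by linarith
        calc (E:ℝ) = ((E:ℝ)/n) * n := by field_simp
          _ ≤ ((t:ℝ) - δ) * n := mul_le_mul_of_nonneg_right h1 hn_pos.le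
          _ = n * ((t:ℝ) - δ) := mul_comm _ _
      have h2 : δ * (n:ℝ) ≤ (d:ℝ) * d := by
        have htd : (t:ℝ) ≤ d := by exact_mod_cast ht_d
        have ht0 : (0:ℝ) ≤ t := by positivity
        nlinarith
      calc Real.sqrt (δ * n) ≤ Real.sqrt ((d:ℝ) * d) := Real.sqrt_le_sqrt h2
        _ = d := Real.sqrt_mul_self (by positivity)
end

section
/- For every odd n = 2k+1, the set D consisting of all positions (i,j) in an n × n array with i ≤ k and j ≥ n − k + i, together with all positions with i ≥ k + 2 and j ≤ i − k − 1, is a dynamic monopoly of Kₙ □ Kₙ with threshold n − 1 at every vertex, and |D| = (n² − 1)/4. -/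
open SimpleGraph

section helpers
lemma cardlt (n c : ℕ) : ((Finset.univ : Finset (Fin n)).filter fun x : Fin n => (x : ℕ) < c).card = min c n := by
  rcases lt_or_ge c n with h | h
  · have : ((Finset.univ : Finset (Fin n)).filter fun x : Fin n => (x : ℕ) < c) = Finset.Iio ⟨c, h⟩ := by
      ext x; simp [Fin.lt_def]
    rw [this, Fin.card_Iio]; simp; omega
  · have : ((Finset.univ : Finset (Fin n)).filter fun x : Fin n => (x : ℕ) < c) = Finset.univ := by
      ext x; simpa using lt_of_lt_of_le x.isLt h
    rw [this, Finset.card_univ, Fintype.card_fin]; omega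

lemma cardge (n c : ℕ) : ((Finset.univ : Finset (Fin n)).filter fun x : Fin n => c ≤ (x : ℕ)).card = n - c := by
  rcases lt_or_ge c n with h | h
  · have : ((Finset.univ : Finset (Fin n)).filter fun x : Fin n => c ≤ (x : ℕ)) = Finset.Ici ⟨c, h⟩ := by
      ext x; simp [Fin.le_def]
    rw [this, Fin.card_Ici]
  · have : ((Finset.univ : Finset (Fin n)).filter fun x : Fin n => c ≤ (x : ℕ)) = ∅ := by
      ext x; simp; omega
    rw [this, Finset.card_empty]; omega

lemma cardor {n : ℕ} (p q : Fin n → Prop) [DecidablePred p] [DecidablePred q]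
    (h : ∀ x, ¬(p x ∧ q x)) :
    ((Finset.univ : Finset (Fin n)).filter fun x => p x ∨ q x).card
      = (Finset.univ.filter p).card + (Finset.univ.filter q).card := by
  rw [Finset.filter_or, Finset.card_union_of_disjoint]
  rw [Finset.disjoint_left]
  intro a ha hb
  simp only [Finset.mem_filter] at ha hb
  exact h a ⟨ha.2, hb.2⟩

lemma stepMono {V : Type*} (G : SimpleGraph V) [Finite V] (τ : V → ℕ) {A B : Set V}
    (h : A ⊆ B) : activationStep G τ A ⊆ activationStep G τ B := by
  apply Set.union_subset_union h
  intro v hv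
  exact le_trans hv (Set.ncard_le_ncard (Set.inter_subset_inter_right _ h) (Set.toFinite _))

lemma key {n : ℕ} (A : Set (Fin n × Fin n)) (v : Fin n × Fin n)
    (J I : Finset (Fin n)) (hJv : v.2 ∉ J) (hIv : v.1 ∉ I)
    (hJA : ∀ j' ∈ J, ((v.1, j') : Fin n × Fin n) ∈ A)
    (hIA : ∀ i' ∈ I, ((i', v.2) : Fin n × Fin n) ∈ A)
    (hcard : n - 1 ≤ J.card + I.card) :
    v ∈ activationStep ((⊤ : SimpleGraph (Fin n)) □ (⊤ : SimpleGraph (Fin n))) (fun _ => n - 1) A := by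
  right
  simp only [Set.mem_setOf_eq]
  set F : Finset (Fin n × Fin n) :=
    (J.map ⟨fun j' => (v.1, j'), fun a b h => congrArg Prod.snd h⟩)
      ∪ (I.map ⟨fun i' => (i', v.2), fun a b h => congrArg Prod.fst h⟩) with hF
  have hdisj : Disjoint (J.map ⟨fun j' => (v.1, j'), fun a b h => congrArg Prod.snd h⟩)
      (I.map ⟨fun i' => (i', v.2), fun a b h => congrArg Prod.fst h⟩) := by
    rw [Finset.disjoint_left]
    intro q hq hq'
    simp only [Finset.mem_map, Function.Embedding.coeFn_mk] at hq hq'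
    obtain ⟨j', hj', rfl⟩ := hq
    obtain ⟨i', hi', he⟩ := hq'
    have h1 : j' = v.2 := (Prod.mk.injEq _ _ _ _ ▸ he).2.symm ▸ rfl
    exact hJv (h1 ▸ hj')
  have hcardF : F.card = J.card + I.card := by
    rw [hF, Finset.card_union_of_disjoint hdisj, Finset.card_map, Finset.card_map]
  have hsub : (F : Set (Fin n × Fin n)) ⊆
      ((⊤ : SimpleGraph (Fin n)) □ (⊤ : SimpleGraph (Fin n))).neighborSet v ∩ A := by
    intro q hq
    simp only [hF, Finset.coe_union, Set.mem_union, Finset.coe_map,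
      Set.mem_image, Finset.mem_coe, Function.Embedding.coeFn_mk] at hq
    rcases hq with ⟨j', hj', rfl⟩ | ⟨i', hi', rfl⟩
    · refine ⟨?_, hJA j' hj'⟩
      have : j' ≠ v.2 := fun h => hJv (h ▸ hj')
      simp only [SimpleGraph.mem_neighborSet, SimpleGraph.boxProd_adj, SimpleGraph.top_adj]
      tauto
    · refine ⟨?_, hIA i' hi'⟩
      have : i' ≠ v.1 := fun h => hIv (h ▸ hi')
      simp only [SimpleGraph.mem_neighborSet, SimpleGraph.boxProd_adj, SimpleGraph.top_adj]
      tauto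
  calc n - 1 ≤ F.card := hcardF ▸ hcard
    _ = (F : Set (Fin n × Fin n)).ncard := (Set.ncard_coe_finset F).symm
    _ ≤ _ := Set.ncard_le_ncard hsub (Set.toFinite _)

end helpers

def Dset (n k : ℕ) : Set (Fin n × Fin n) :=
  {p : Fin n × Fin n |
    ((p.1 : ℕ) + 1 ≤ k ∧ n + ((p.1 : ℕ) + 1) ≤ ((p.2 : ℕ) + 1) + k) ∨
    (k + 2 ≤ (p.1 : ℕ) + 1 ∧ ((p.2 : ℕ) + 1) + k + 1 ≤ (p.1 : ℕ) + 1)}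

def Qset (n k r : ℕ) : Set (Fin n × Fin n) :=
  {p | 2 * k + r ≤ (p.1 : ℕ) + (p.2 : ℕ) ∨ (p.1 : ℕ) + (p.2 : ℕ) + r ≤ 2 * k ∨
       (p.2 : ℕ) + r ≤ (p.1 : ℕ) ∨ (p.1 : ℕ) + r ≤ (p.2 : ℕ)}

def chain (n k t : ℕ) : Set (Fin n × Fin n) :=
  if t ≤ k then
    {p | p ∈ Dset n k ∨ (p.1 : ℕ) + (p.2 : ℕ) + 1 ≤ t ∨ 4 * k + 1 ≤ (p.1 : ℕ) + (p.2 : ℕ) + t}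
  else Qset n k (2 * k + 1 - t)

lemma chain_of_le {n k t : ℕ} (ht : t ≤ k) : chain n k t =
    {p : Fin n × Fin n | p ∈ Dset n k ∨ (p.1 : ℕ) + (p.2 : ℕ) + 1 ≤ t ∨
      4 * k + 1 ≤ (p.1 : ℕ) + (p.2 : ℕ) + t} := by
  simp [chain, ht]

lemma glue {n k : ℕ} (hn : n = 2 * k + 1) : chain n k k = Qset n k (k + 1) := by
  rw [chain_of_le le_rfl]
  ext ⟨i, j⟩
  have hi := i.isLt
  have hj := j.isLt
  simp only [Set.mem_setOf_eq, Dset, Qset]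
  omega

lemma step1 {n k : ℕ} (hn : n = 2 * k + 1) (t : ℕ) (ht : t < k) :
    chain n k (t + 1) ⊆
      activationStep ((⊤ : SimpleGraph (Fin n)) □ (⊤ : SimpleGraph (Fin n)))
        (fun _ => n - 1) (chain n k t) := by
  intro v hv
  by_cases hv' : v ∈ chain n k t
  · exact Or.inl hv'
  rw [chain_of_le (by omega : t + 1 ≤ k)] at hv
  rw [chain_of_le (by omega : t ≤ k)] at hv'
  obtain ⟨i, j⟩ := v
  have hi := i.isLt
  have hj := j.isLt
  simp only [Set.mem_setOf_eq, Dset] at hv hv'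
  push_neg at hv'
  rcases (by omega : (i : ℕ) + (j : ℕ) = t ∨ (i : ℕ) + (j : ℕ) + t = 4 * k) with hc | hc
  · -- bottom-left corner growth
    apply key _ _ (Finset.univ.filter fun x : Fin n => (x : ℕ) < (j : ℕ) ∨ (i : ℕ) + k + 1 ≤ (x : ℕ))
      (Finset.univ.filter fun x : Fin n => (x : ℕ) < (i : ℕ) ∨ (j : ℕ) + k + 1 ≤ (x : ℕ))
    · simp only [Finset.mem_filter]; omega
    · simp only [Finset.mem_filter]; omega
    · intro j' hj'
      simp only [Finset.mem_filter] at hj'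
      rw [chain_of_le (by omega : t ≤ k)]
      simp only [Set.mem_setOf_eq, Dset]
      omega
    · intro i' hi'
      simp only [Finset.mem_filter] at hi'
      rw [chain_of_le (by omega : t ≤ k)]
      simp only [Set.mem_setOf_eq, Dset]
      omega
    · rw [cardor _ _ (by intro x; omega), cardor _ _ (by intro x; omega),
        cardlt, cardge, cardlt, cardge]
      omega
  · -- top-right corner growth
    apply key _ _ (Finset.univ.filter fun x : Fin n => (x : ℕ) < (i : ℕ) - k ∨ (j : ℕ) + 1 ≤ (x : ℕ))
      (Finset.univ.filter fun x : Fin n => (x : ℕ) < (j : ℕ) - k ∨ (i : ℕ) + 1 ≤ (x : ℕ))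
    · simp only [Finset.mem_filter]; omega
    · simp only [Finset.mem_filter]; omega
    · intro j' hj'
      simp only [Finset.mem_filter] at hj'
      rw [chain_of_le (by omega : t ≤ k)]
      simp only [Set.mem_setOf_eq, Dset]
      omega
    · intro i' hi'
      simp only [Finset.mem_filter] at hi'
      rw [chain_of_le (by omega : t ≤ k)]
      simp only [Set.mem_setOf_eq, Dset]
      omega
    · rw [cardor _ _ (by intro x; omega), cardor _ _ (by intro x; omega),
        cardlt, cardge, cardlt, cardge]
      omega

lemma step2 {n k : ℕ} (hn : n = 2 * k + 1) (r : ℕ) (hr : r ≤ k) :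
    Qset n k r ⊆
      activationStep ((⊤ : SimpleGraph (Fin n)) □ (⊤ : SimpleGraph (Fin n)))
        (fun _ => n - 1) (Qset n k (r + 1)) := by
  intro v hv
  by_cases hv' : v ∈ Qset n k (r + 1)
  · exact Or.inl hv'
  obtain ⟨i, j⟩ := v
  have hi := i.isLt
  have hj := j.isLt
  simp only [Qset, Set.mem_setOf_eq] at hv hv'
  push_neg at hv'
  obtain ⟨a, b, ha, hb, hab⟩ : ∃ a b : ℕ,
      ((i : ℕ) + a = k ∨ k + a = (i : ℕ)) ∧ ((j : ℕ) + b = k ∨ k + b = (j : ℕ)) ∧ a + b = r := by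
    rcases le_total (i : ℕ) k with h1 | h1 <;> rcases le_total (j : ℕ) k with h2 | h2
    · exact ⟨k - i, k - j, by omega, by omega, by omega⟩
    · exact ⟨k - i, (j : ℕ) - k, by omega, by omega, by omega⟩
    · exact ⟨(i : ℕ) - k, k - j, by omega, by omega, by omega⟩
    · exact ⟨(i : ℕ) - k, (j : ℕ) - k, by omega, by omega, by omega⟩
  apply key _ _ (Finset.univ.filter fun x : Fin n => (x : ℕ) < k - b ∨ k + b + 1 ≤ (x : ℕ))
    (Finset.univ.filter fun x : Fin n => (x : ℕ) < k - a ∨ k + a + 1 ≤ (x : ℕ))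
  · simp only [Finset.mem_filter]; omega
  · simp only [Finset.mem_filter]; omega
  · intro j' hj'
    simp only [Finset.mem_filter] at hj'
    simp only [Qset, Set.mem_setOf_eq]
    omega
  · intro i' hi'
    simp only [Finset.mem_filter] at hi'
    simp only [Qset, Set.mem_setOf_eq]
    omega
  · rw [cardor _ _ (by intro x; omega), cardor _ _ (by intro x; omega),
      cardlt, cardge, cardlt, cardge]
    omega

lemma chain_of_gt {n k t : ℕ} (h : k < t) : chain n k t = Qset n k (2 * k + 1 - t) := by
  simp [chain, Nat.not_le.2 h]

lemma chain_step {n k : ℕ} (hn : n = 2 * k + 1) (t : ℕ) :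
    chain n k (t + 1) ⊆
      activationStep ((⊤ : SimpleGraph (Fin n)) □ (⊤ : SimpleGraph (Fin n)))
        (fun _ => n - 1) (chain n k t) := by
  rcases lt_or_ge t k with h | h
  · exact step1 hn t h
  have hct : chain n k t = Qset n k (2 * k + 1 - t) := by
    rcases eq_or_lt_of_le h with h' | h'
    · have e : 2 * k + 1 - t = k + 1 := by omega
      rw [e, ← h']
      exact glue hn
    · exact chain_of_gt h'
  rw [chain_of_gt (by omega : k < t + 1), hct]
  rcases le_or_gt t (2 * k) with h2 | h2
  · have e : 2 * k + 1 - t = (2 * k + 1 - (t + 1)) + 1 := by omega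
    rw [e]
    exact step2 hn _ (by omega)
  · have e1 : 2 * k + 1 - t = 0 := by omega
    have e2 : 2 * k + 1 - (t + 1) = 0 := by omega
    rw [e1, e2]
    exact fun v hv => Or.inl hv

lemma chain_sub {n k : ℕ} (hn : n = 2 * k + 1) (t : ℕ) :
    chain n k t ⊆
      (activationStep ((⊤ : SimpleGraph (Fin n)) □ (⊤ : SimpleGraph (Fin n)))
        (fun _ => n - 1))^[t] (Dset n k) := by
  induction t with
  | zero =>
    intro ⟨i, j⟩ hv
    have hi := i.isLt
    rw [chain_of_le (Nat.zero_le _)] at hv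
    simp only [Set.mem_setOf_eq] at hv
    rcases hv with h | h | h
    · exact h
    · omega
    · omega
  | succ t ih =>
    rw [Function.iterate_succ_apply']
    exact subset_trans (chain_step hn t) (stepMono _ _ ih)

lemma chain_top {n k : ℕ} (hn : n = 2 * k + 1) : chain n k (2 * k + 1) = Set.univ := by
  rw [chain_of_gt (by omega), (by omega : 2 * k + 1 - (2 * k + 1) = 0)]
  ext ⟨i, j⟩
  simp only [Qset, Set.mem_setOf_eq, Set.mem_univ, iff_true]
  omega

lemma dynamo_part {n k : ℕ} (hn : n = 2 * k + 1) :
    IsDynamo ((⊤ : SimpleGraph (Fin n)) □ (⊤ : SimpleGraph (Fin n))) (fun _ => n - 1)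
      (Dset n k) := by
  refine ⟨2 * k + 1, Set.eq_univ_of_univ_subset ?_⟩
  rw [← chain_top hn]
  exact chain_sub hn _

lemma sum_tri (k : ℕ) : ∑ i ∈ Finset.range (k + 1), (k - i) = ∑ i ∈ Finset.range (k + 1), i := by
  rw [← Finset.sum_range_reflect]
  apply Finset.sum_congr rfl
  intro x hx
  simp only [Finset.mem_range] at hx
  omega

lemma Dset_card {n k : ℕ} (hn : n = 2 * k + 1) : (Dset n k).ncard = (n ^ 2 - 1) / 4 := by
  classical
  set row : Fin n → Finset (Fin n) := fun i =>
    Finset.univ.filter fun j : Fin n => k + 1 + (i : ℕ) ≤ (j : ℕ) ∨ (j : ℕ) < (i : ℕ) - k with hrow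
  have hrowcard : ∀ i : Fin n, (row i).card = (k - (i : ℕ)) + ((i : ℕ) - k) := by
    intro i
    have hi := i.isLt
    rw [hrow]
    rw [cardor _ _ (by intro x; omega), cardge, cardlt]
    omega
  set F : Finset (Fin n × Fin n) :=
    Finset.univ.biUnion (fun i : Fin n =>
      (row i).map ⟨fun j => (i, j), fun a b h => congrArg Prod.snd h⟩) with hF
  have hDF : Dset n k = (F : Set (Fin n × Fin n)) := by
    ext ⟨i, j⟩
    have hi := i.isLt
    have hj := j.isLt
    simp only [Dset, Set.mem_setOf_eq, hF, Finset.coe_biUnion, Set.mem_iUnion,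
      Finset.mem_coe, Finset.mem_map, Function.Embedding.coeFn_mk, Finset.mem_univ,
      Set.iUnion_true, hrow, Finset.mem_filter, true_and]
    constructor
    · intro h
      exact ⟨i, ⟨j, by omega, rfl⟩⟩
    · rintro ⟨i', j', hj', he⟩
      obtain ⟨rfl, rfl⟩ := Prod.mk.injEq .. ▸ he
      omega
  have hFcard : F.card = ∑ i : Fin n, (row i).card := by
    rw [hF]
    rw [Finset.card_biUnion]
    · simp [Finset.card_map]
    · intro a _ b _ hab
      simp only [Function.onFun]
      rw [Finset.disjoint_left]
      rintro q hq hq'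
      simp only [Finset.mem_map, Function.Embedding.coeFn_mk] at hq hq'
      obtain ⟨j', _, rfl⟩ := hq
      obtain ⟨j'', _, he⟩ := hq'
      exact hab ((Prod.mk.injEq .. ▸ he).1.symm ▸ rfl)
  have hsum : ∑ i : Fin n, (row i).card = k * (k + 1) := by
    calc ∑ i : Fin n, (row i).card
        = ∑ i ∈ Finset.range n, ((k - i) + (i - k)) := by
          rw [← Fin.sum_univ_eq_sum_range]
          exact Finset.sum_congr rfl fun i _ => hrowcard i
      _ = ∑ i ∈ Finset.range n, (k - i) + ∑ i ∈ Finset.range n, (i - k) := by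
          rw [Finset.sum_add_distrib]
      _ = k * (k + 1) := by
          have h1 : ∑ i ∈ Finset.range n, (k - i) = ∑ i ∈ Finset.range (k + 1), (k - i) := by
            symm
            apply Finset.sum_subset (Finset.range_subset_range.2 (by omega))
            intro x _ hx
            simp only [Finset.mem_range] at hx
            omega
          have h2 : ∑ i ∈ Finset.range n, (i - k) = ∑ i ∈ Finset.range n, (n - 1 - i - k) := by
            rw [← Finset.sum_range_reflect]
          have h2' : ∑ i ∈ Finset.range n, (n - 1 - i - k) = ∑ i ∈ Finset.range n, (k - i) := by
            apply Finset.sum_congr rfl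
            intro x hx
            simp only [Finset.mem_range] at hx
            omega
          have h3 : (∑ i ∈ Finset.range (k + 1), i) * 2 = (k + 1) * k :=
            Finset.sum_range_id_mul_two (k + 1)
          rw [h1, h2, h2', h1, sum_tri]
          set S := ∑ i ∈ Finset.range (k + 1), i
          have : (k + 1) * k = k * (k + 1) := by ring
          omega
  rw [hDF, Set.ncard_coe_finset, hFcard, hsum, hn]
  have : (2 * k + 1) ^ 2 = k * (k + 1) * 4 + 1 := by ring
  omega

/-- For odd `n = 2k+1`, the union of the top-right and bottom-left triangular subarrays
(1-indexed positions `(i,j)` with `i ≤ k ∧ j ≥ n − k + i`, or `i ≥ k + 2 ∧ j ≤ i − k − 1`)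
is a dynamic monopoly of `Kₙ □ Kₙ` with threshold `n − 1`, of size `(n² − 1)/4`. -/
theorem stmt18 (n k : ℕ) (hn : n = 2 * k + 1) :
    IsDynamo ((⊤ : SimpleGraph (Fin n)) □ (⊤ : SimpleGraph (Fin n))) (fun _ => n - 1)
        {p : Fin n × Fin n |
          ((p.1 : ℕ) + 1 ≤ k ∧ n + ((p.1 : ℕ) + 1) ≤ ((p.2 : ℕ) + 1) + k) ∨
          (k + 2 ≤ (p.1 : ℕ) + 1 ∧ ((p.2 : ℕ) + 1) + k + 1 ≤ (p.1 : ℕ) + 1)} ∧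
      ({p : Fin n × Fin n |
          ((p.1 : ℕ) + 1 ≤ k ∧ n + ((p.1 : ℕ) + 1) ≤ ((p.2 : ℕ) + 1) + k) ∨
          (k + 2 ≤ (p.1 : ℕ) + 1 ∧ ((p.2 : ℕ) + 1) + k + 1 ≤ (p.1 : ℕ) + 1)}).ncard
        = (n ^ 2 - 1) / 4 := by
  constructor
  · exact dynamo_part hn
  · exact Dset_card hn
end
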